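/- (Stability of linear-quadratic tilts in the quadratic parameter.) Let μ be a probability measure on ℝ and d0 > 0, and suppose there exist ε ∈ (0, d0/2) and C > 0 such that for all d ∈ (d0 − ε, d0 + ε): the mean of B_{0,d}(μ) is bounded in absolute value by C and ‖B_{t,d}(μ)‖_{ψ2} ≤ C(1 + |t|) for all t ∈ ℝ. Then: (i) there is a constant K such that for all t ∈ ℝ and all d, d' ∈ (d0 − ε, d0 + ε), |log ∫ exp(t·b − d·b²/2) dμ(b) − log ∫ exp(t·b − d'·b²/2) dμ(b)| ≤ K|d − d'|(1 + |t|⁶); and (ii) for every r > 0 there is a constant K_r such that for every measurable h : ℝ → ℝ with |h(b)| ≤ 1 + |b|^r, all t ∈ ℝ, and all d, d' ∈ (d0 − ε, d0 + ε), |∫ h dB_{t,d}(μ) − ∫ h dB_{t,d'}(μ)| ≤ K_r |d − d'| (1 + |t|^{3(r+2)}). -/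

import Mathlib

open MeasureTheory ProbabilityTheory Real Filter

noncomputable section

/-- `SubGaussianNormLE ρ K` : the MGF of `ρ` around its mean is bounded by `exp (K² t²/2)`;
equivalently, the sub-Gaussian norm of a random variable with law `ρ` is at most `K`. -/
def SubGaussianNormLE (ρ : Measure ℝ) (K : ℝ) : Prop :=
  ∀ t : ℝ, ∫ x, Real.exp (t * (x - ∫ y, y ∂ρ)) ∂ρ ≤ Real.exp (K ^ 2 * t ^ 2 / 2)

/-- The linear-quadratic tilt `B_{t,d}(μ)`: probability measure with density w.r.t. `μ`
proportional to `b ↦ exp (t b − d b²/2)`. -/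
def tiltLQ (μ : Measure ℝ) (t d : ℝ) : Measure ℝ :=
  ((μ.withDensity fun b => ENNReal.ofReal (Real.exp (t * b - d * b ^ 2 / 2))) Set.univ)⁻¹ •
    μ.withDensity fun b => ENNReal.ofReal (Real.exp (t * b - d * b ^ 2 / 2))


lemma aux_rpow_self_pos {s : ℝ} (hs : 0 ≤ s) : 0 < s ^ s := by
  rcases eq_or_lt_of_le hs with rfl | hs
  · simp
  · exact Real.rpow_pos_of_pos hs s

lemma aux_rpow_le_exp {x s : ℝ} (hx : 0 ≤ x) (hs : 0 ≤ s) :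
    x ^ s ≤ s ^ s * Real.exp (x - s) := by
  rcases eq_or_lt_of_le hs with rfl | hs
  · simpa using Real.one_le_exp hx
  rcases eq_or_lt_of_le hx with rfl | hx
  · rw [Real.zero_rpow (ne_of_gt hs)]
    positivity
  have h1 : Real.log (x / s) ≤ x / s - 1 := Real.log_le_sub_one_of_pos (by positivity)
  have h2 : Real.log x * s ≤ Real.log s * s + (x - s) := by
    rw [Real.log_div (ne_of_gt hx) (ne_of_gt hs)] at h1
    have := mul_le_mul_of_nonneg_left h1 hs.le
    have hss : s * (x / s - 1) = x - s := by field_simp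
    nlinarith
  calc x ^ s = Real.exp (Real.log x * s) := by rw [Real.rpow_def_of_pos hx]
    _ ≤ Real.exp (Real.log s * s + (x - s)) := Real.exp_le_exp.2 h2
    _ = s ^ s * Real.exp (x - s) := by
        rw [Real.exp_add, Real.rpow_def_of_pos hs]

lemma aux_quad {p c : ℝ} (hc : 0 < c) (y : ℝ) : p * y - c * y ^ 2 ≤ p ^ 2 / (4 * c) := by
  have h : 0 ≤ c * (y - p / (2 * c)) ^ 2 := by positivity
  have he : c * (y - p / (2 * c)) ^ 2 = c * y ^ 2 - p * y + p ^ 2 / (4 * c) := by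
    field_simp; ring
  nlinarith

lemma aux_key_bound (s a c : ℝ) (hs : 0 ≤ s) (hc : 0 < c) :
    ∃ M : ℝ, 0 < M ∧ ∀ b : ℝ, |b| ^ s * Real.exp (a * b - c * b ^ 2 / 2) ≤ M := by
  have hss := aux_rpow_self_pos hs
  refine ⟨s ^ s * Real.exp (-s) * Real.exp ((1 + |a|) ^ 2 / (4 * (c / 2))), by positivity,
    fun b => ?_⟩
  have h1 : |b| ^ s ≤ s ^ s * Real.exp (|b| - s) := aux_rpow_le_exp (abs_nonneg b) hs
  have h2 : |b| + (a * b - c * b ^ 2 / 2) ≤ (1 + |a|) ^ 2 / (4 * (c / 2)) := by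
    have hab : a * b ≤ |a| * |b| := by
      calc a * b ≤ |a * b| := le_abs_self _
      _ = |a| * |b| := abs_mul a b
    have hq : (1 + |a|) * |b| - (c / 2) * |b| ^ 2 ≤ (1 + |a|) ^ 2 / (4 * (c / 2)) :=
      aux_quad (by linarith) |b|
    have hcb : c * b ^ 2 / 2 = (c / 2) * |b| ^ 2 := by rw [sq_abs]; ring
    nlinarith
  calc |b| ^ s * Real.exp (a * b - c * b ^ 2 / 2)
      ≤ (s ^ s * Real.exp (|b| - s)) * Real.exp (a * b - c * b ^ 2 / 2) := by
        apply mul_le_mul_of_nonneg_right h1 (Real.exp_pos _).le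
    _ = s ^ s * Real.exp (-s) * Real.exp (|b| + (a * b - c * b ^ 2 / 2)) := by
        rw [mul_assoc, ← Real.exp_add, mul_assoc, ← Real.exp_add]
        congr 2
        ring
    _ ≤ s ^ s * Real.exp (-s) * Real.exp ((1 + |a|) ^ 2 / (4 * (c / 2))) := by
        exact mul_le_mul_of_nonneg_left (Real.exp_le_exp.2 h2) (by positivity)

/-- the tilt weight -/
def tw (t d b : ℝ) : ℝ := Real.exp (t * b - d * b ^ 2 / 2)

lemma tw_pos (t d b : ℝ) : 0 < tw t d b := Real.exp_pos _

lemma measurable_tw (t d : ℝ) : Measurable (tw t d) := by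
  unfold tw; fun_prop

lemma aux_one_add_bound (s t d : ℝ) (hs : 0 ≤ s) (hd : 0 < d) :
    ∃ M : ℝ, 0 < M ∧ ∀ b : ℝ, (1 + |b| ^ s) * tw t d b ≤ M := by
  obtain ⟨M0, hM0, h0⟩ := aux_key_bound 0 t d le_rfl hd
  obtain ⟨Ms, hMs, hsb⟩ := aux_key_bound s t d hs hd
  refine ⟨M0 + Ms, by positivity, fun b => ?_⟩
  have e0 := h0 b
  have es := hsb b
  rw [Real.rpow_zero, one_mul] at e0
  have : (1 + |b| ^ s) * tw t d b = tw t d b + |b| ^ s * tw t d b := by ring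
  rw [this]
  exact add_le_add e0 es

variable {μ : Measure ℝ} [IsProbabilityMeasure μ]

lemma integrable_weight (g : ℝ → ℝ) (hg : AEStronglyMeasurable g μ)
    {s D : ℝ} (hs : 0 ≤ s) (hD : ∀ b, |g b| ≤ D * (1 + |b| ^ s))
    {t d : ℝ} (hd : 0 < d) :
    Integrable (fun b => g b * tw t d b) μ := by
  obtain ⟨M, hM, hMb⟩ := aux_one_add_bound s t d hs hd
  have hD0 : 0 ≤ D := by
    have := (abs_nonneg (g 0)).trans (hD 0)
    nlinarith [aux_rpow_self_pos hs, abs_nonneg (0:ℝ), Real.rpow_nonneg (abs_nonneg (0:ℝ)) s]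
  refine Integrable.mono' (integrable_const (D * M))
    ((hg.mul (measurable_tw t d).aestronglyMeasurable :
      AEStronglyMeasurable (fun b => g b * tw t d b) μ)) (Eventually.of_forall fun b => ?_)
  simp only [Real.norm_eq_abs]
  rw [abs_mul, abs_of_pos (tw_pos t d b)]
  calc |g b| * tw t d b ≤ (D * (1 + |b| ^ s)) * tw t d b :=
        mul_le_mul_of_nonneg_right (hD b) (tw_pos t d b).le
    _ = D * ((1 + |b| ^ s) * tw t d b) := by ring
    _ ≤ D * M := by
        apply mul_le_mul_of_nonneg_left (hMb b) hD0

lemma integrable_tw {t d : ℝ} (hd : 0 < d) : Integrable (tw t d) μ := by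
  have := integrable_weight (μ := μ) (fun _ => 1) aestronglyMeasurable_const (le_refl (0:ℝ))
    (D := 1) (fun b => by simp [Real.rpow_nonneg (abs_nonneg b)]) hd (t := t)
  simpa using this

/-- normalizing constant -/
def Nc (μ : Measure ℝ) (t d : ℝ) : ℝ := ∫ b, tw t d b ∂μ

lemma Nc_pos {t d : ℝ} (hd : 0 < d) : 0 < Nc μ t d := by
  rw [Nc, integral_pos_iff_support_of_nonneg (fun b => (tw_pos t d b).le) (integrable_tw hd)]
  have hsupp : Function.support (tw t d) = Set.univ := by
    ext b; simp [Function.mem_support, (tw_pos t d b).ne']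
  rw [hsupp]
  simp

lemma tiltLQ_eq (t d : ℝ) :
    tiltLQ μ t d = ((μ.withDensity fun b => ENNReal.ofReal (tw t d b)) Set.univ)⁻¹ •
      μ.withDensity fun b => ENNReal.ofReal (tw t d b) := rfl

lemma withDensity_tw_univ {t d : ℝ} (hd : 0 < d) :
    (μ.withDensity fun b => ENNReal.ofReal (tw t d b)) Set.univ = ENNReal.ofReal (Nc μ t d) := by
  rw [withDensity_apply _ MeasurableSet.univ, setLIntegral_univ,
    ← ofReal_integral_eq_lintegral_ofReal (integrable_tw hd)
      (Eventually.of_forall fun b => (tw_pos t d b).le)]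
  rfl

lemma integral_tiltLQ {t d : ℝ} (hd : 0 < d) (f : ℝ → ℝ) :
    ∫ b, f b ∂(tiltLQ μ t d) = (Nc μ t d)⁻¹ * ∫ b, tw t d b * f b ∂μ := by
  have hN := Nc_pos (μ := μ) hd (t := t)
  rw [tiltLQ_eq, withDensity_tw_univ hd, integral_smul_measure]
  have h1 : (ENNReal.ofReal (Nc μ t d))⁻¹.toReal = (Nc μ t d)⁻¹ := by
    rw [ENNReal.toReal_inv, ENNReal.toReal_ofReal hN.le]
  rw [h1]
  have hdens : (fun b => ENNReal.ofReal (tw t d b)) =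
      (fun b => ENNReal.ofNNReal (Real.toNNReal (tw t d b))) := rfl
  rw [hdens, integral_withDensity_eq_integral_smul ((measurable_tw t d).real_toNNReal)]
  simp only [smul_eq_mul, NNReal.smul_def, Real.coe_toNNReal _ (tw_pos t d _).le]

lemma isProbability_tiltLQ {t d : ℝ} (hd : 0 < d) : IsProbabilityMeasure (tiltLQ μ t d) := by
  constructor
  rw [tiltLQ_eq, withDensity_tw_univ hd]
  rw [Measure.smul_apply, withDensity_tw_univ hd, smul_eq_mul]
  rw [ENNReal.inv_mul_cancel]
  · simp [Nc_pos (μ := μ) hd (t := t)]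
  · exact ENNReal.ofReal_ne_top

lemma integrable_tiltLQ (f : ℝ → ℝ) {t d : ℝ} (hd : 0 < d)
    (hf : Integrable (fun b => tw t d b * f b) μ) : Integrable f (tiltLQ μ t d) := by
  rw [tiltLQ_eq, withDensity_tw_univ hd]
  have hne : (ENNReal.ofReal (Nc μ t d))⁻¹ ≠ ⊤ := by
    simp [Nc_pos (μ := μ) hd (t := t), ne_of_gt]
  apply Integrable.smul_measure _ hne
  have hdens : (fun b => ENNReal.ofReal (tw t d b)) =
      (fun b => ENNReal.ofNNReal (Real.toNNReal (tw t d b))) := rfl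
  rw [hdens, integrable_withDensity_iff_integrable_smul ((measurable_tw t d).real_toNNReal)]
  simp only [NNReal.smul_def, smul_eq_mul, Real.coe_toNNReal _ (tw_pos t d _).le]
  exact hf


lemma aux_abs_bound (s a c : ℝ) (hs : 0 ≤ s) (hc : 0 < c) :
    ∃ M : ℝ, 0 < M ∧ ∀ b : ℝ, |b| ^ s * Real.exp (a * |b| - c * b ^ 2 / 2) ≤ M := by
  obtain ⟨M, hM, h⟩ := aux_key_bound s a c hs hc
  exact ⟨M, hM, fun b => by have := h |b|; rwa [abs_abs, sq_abs] at this⟩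

lemma aux_dom_bound (s a c : ℝ) (hs : 0 ≤ s) (hc : 0 < c) :
    ∃ M : ℝ, 0 < M ∧
      ∀ b : ℝ, (1 + |b| ^ s) * ((1 + b ^ 2) * Real.exp (a * |b| - c * b ^ 2 / 2)) ≤ M := by
  obtain ⟨M0, h0p, h0⟩ := aux_abs_bound 0 a c le_rfl hc
  obtain ⟨M2, h2p, h2⟩ := aux_abs_bound 2 a c (by norm_num) hc
  obtain ⟨Ms, hsp, hsb⟩ := aux_abs_bound s a c hs hc
  obtain ⟨Mt, htp, ht⟩ := aux_abs_bound (s + 2) a c (by linarith) hc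
  refine ⟨M0 + M2 + Ms + Mt, by positivity, fun b => ?_⟩
  have h2eq : |b| ^ (2 : ℝ) = b ^ 2 := by
    rw [show (2 : ℝ) = ((2 : ℕ) : ℝ) by norm_num, Real.rpow_natCast, sq_abs]
  have e0 := h0 b; rw [Real.rpow_zero, one_mul] at e0
  have e2 := h2 b; rw [h2eq] at e2
  have es := hsb b
  have et := ht b
  have hteq : |b| ^ (s + 2) = |b| ^ s * b ^ 2 := by
    rw [Real.rpow_add' (abs_nonneg b) (by linarith), h2eq]
  rw [hteq] at et
  nlinarith [Real.exp_pos (a * |b| - c * b ^ 2 / 2), Real.rpow_nonneg (abs_nonneg b) s,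
    sq_nonneg b]

lemma aux_D_nonneg {g : ℝ → ℝ} {s D : ℝ} (hD : ∀ b, |g b| ≤ D * (1 + |b| ^ s)) : 0 ≤ D := by
  have h := (abs_nonneg (g 0)).trans (hD 0)
  nlinarith [Real.rpow_nonneg (abs_nonneg (0 : ℝ)) s]

lemma abs_le_one_add_sq (b : ℝ) : |b| ≤ 1 + b ^ 2 := by
  nlinarith [sq_abs b, sq_nonneg (|b| - 1)]

lemma tw_le_of_le {a t d c b : ℝ} (hta : |t| ≤ a) (hcd : c ≤ d) :
    tw t d b ≤ Real.exp (a * |b| - c * b ^ 2 / 2) := by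
  apply Real.exp_le_exp.2
  have h1 : t * b ≤ a * |b| := by
    calc t * b ≤ |t * b| := le_abs_self _
      _ = |t| * |b| := abs_mul t b
      _ ≤ a * |b| := mul_le_mul_of_nonneg_right hta (abs_nonneg b)
  nlinarith [sq_nonneg b]

lemma hasDerivAt_int_t (g : ℝ → ℝ) (hg : AEStronglyMeasurable g μ)
    {s D : ℝ} (hs : 0 ≤ s) (hD : ∀ b, |g b| ≤ D * (1 + |b| ^ s))
    {d : ℝ} (hd : 0 < d) (t : ℝ) :
    HasDerivAt (fun u => ∫ b, g b * tw u d b ∂μ) (∫ b, (g b * b) * tw t d b ∂μ) t := by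
  obtain ⟨M, hM, hMb⟩ := aux_dom_bound s (|t| + 1) d hs hd
  have hD0 : 0 ≤ D := aux_D_nonneg hD
  refine (hasDerivAt_integral_of_dominated_loc_of_deriv_le (s := Metric.ball t 1)
      (F' := fun u b => (g b * b) * tw u d b) (bound := fun _ => D * M)
      (Metric.ball_mem_nhds t one_pos) (Eventually.of_forall fun u => ?_) (integrable_weight g hg hs hD hd) ?_
      (Eventually.of_forall fun b => fun u hu => ?_) (integrable_const (D * M))
      (Eventually.of_forall fun b => fun u hu => ?_)).2
  · exact hg.mul (measurable_tw u d).aestronglyMeasurable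
  · exact (hg.mul measurable_id.aestronglyMeasurable).mul (measurable_tw t d).aestronglyMeasurable
  · -- bound
    have hub : |u| ≤ |t| + 1 := by
      have := Metric.mem_ball.1 hu
      rw [Real.dist_eq] at this
      have h2 := abs_sub_abs_le_abs_sub u t
      linarith
    have htw : tw u d b ≤ Real.exp ((|t| + 1) * |b| - d * b ^ 2 / 2) := tw_le_of_le hub le_rfl
    rw [Real.norm_eq_abs, abs_mul, abs_mul, abs_of_pos (tw_pos u d b)]
    calc |g b| * |b| * tw u d b
        ≤ (D * (1 + |b| ^ s) * (1 + b ^ 2)) * Real.exp ((|t| + 1) * |b| - d * b ^ 2 / 2) :=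
          mul_le_mul (mul_le_mul (hD b) (abs_le_one_add_sq b) (abs_nonneg b) (by positivity))
            htw (tw_pos u d b).le (by positivity)
      _ = D * ((1 + |b| ^ s) * ((1 + b ^ 2) * Real.exp ((|t| + 1) * |b| - d * b ^ 2 / 2))) := by
          ring
      _ ≤ D * M := mul_le_mul_of_nonneg_left (hMb b) hD0
  · -- pointwise derivative
    have h1 : HasDerivAt (fun u : ℝ => u * b - d * b ^ 2 / 2) b u :=
      (hasDerivAt_mul_const b).sub_const _
    have h2 := h1.exp
    have h3 : HasDerivAt (fun u => tw u d b) (b * tw u d b) u := by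
      simpa [tw, mul_comm] using h2
    have h4 := h3.const_mul (g b)
    simpa [mul_assoc] using h4

lemma hasDerivAt_int_d (g : ℝ → ℝ) (hg : AEStronglyMeasurable g μ)
    {s D : ℝ} (hs : 0 ≤ s) (hD : ∀ b, |g b| ≤ D * (1 + |b| ^ s))
    {t c d : ℝ} (hc : 0 < c) (hcd : c < d) :
    HasDerivAt (fun x => ∫ b, g b * tw t x b ∂μ)
      (∫ b, (g b * (-(b ^ 2) / 2)) * tw t d b ∂μ) d := by
  obtain ⟨M, hM, hMb⟩ := aux_dom_bound s |t| c hs hc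
  have hD0 : 0 ≤ D := aux_D_nonneg hD
  refine (hasDerivAt_integral_of_dominated_loc_of_deriv_le (s := Metric.ball d (d - c))
      (F' := fun x b => (g b * (-(b ^ 2) / 2)) * tw t x b) (bound := fun _ => D * M)
      (Metric.ball_mem_nhds d (by linarith)) (Eventually.of_forall fun x => ?_)
      (integrable_weight g hg hs hD (by linarith : (0:ℝ) < d)) ?_
      (Eventually.of_forall fun b => fun x hx => ?_) (integrable_const (D * M))
      (Eventually.of_forall fun b => fun x hx => ?_)).2
  · exact hg.mul (measurable_tw t x).aestronglyMeasurable
  · exact (hg.mul (by fun_prop : Measurable fun b : ℝ => -(b ^ 2) / 2).aestronglyMeasurable).mul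
      (measurable_tw t d).aestronglyMeasurable
  · -- bound
    have hxc : c ≤ x := by
      have := Metric.mem_ball.1 hx
      rw [Real.dist_eq, abs_sub_lt_iff] at this
      linarith [this.2]
    have htw : tw t x b ≤ Real.exp (|t| * |b| - c * b ^ 2 / 2) := tw_le_of_le le_rfl hxc
    rw [Real.norm_eq_abs, abs_mul, abs_mul, abs_of_pos (tw_pos t x b)]
    have habs : |(-(b ^ 2) / 2)| ≤ 1 + b ^ 2 := by
      have he : |(-(b ^ 2) / 2)| = b ^ 2 / 2 := by
        rw [abs_div, abs_neg, abs_of_nonneg (sq_nonneg b)]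
        norm_num
      rw [he]
      nlinarith [sq_nonneg b]
    calc |g b| * |(-(b ^ 2) / 2)| * tw t x b
        ≤ (D * (1 + |b| ^ s) * (1 + b ^ 2)) * Real.exp (|t| * |b| - c * b ^ 2 / 2) :=
          mul_le_mul (mul_le_mul (hD b) habs (abs_nonneg _) (by positivity))
            htw (tw_pos t x b).le (by positivity)
      _ = D * ((1 + |b| ^ s) * ((1 + b ^ 2) * Real.exp (|t| * |b| - c * b ^ 2 / 2))) := by ring
      _ ≤ D * M := mul_le_mul_of_nonneg_left (hMb b) hD0
  · -- pointwise derivative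
    have h1 : HasDerivAt (fun x : ℝ => x * (b ^ 2 / 2)) (b ^ 2 / 2) x :=
      hasDerivAt_mul_const _
    have h2 : HasDerivAt (fun x : ℝ => t * b - x * b ^ 2 / 2) (-(b ^ 2 / 2)) x := by
      have := h1.const_sub (t * b)
      simpa [mul_div_assoc] using this
    have h3 := h2.exp
    have h4 : HasDerivAt (fun x => tw t x b) ((-(b ^ 2) / 2) * tw t x b) x := by
      simp only [tw]
      convert h3 using 1
      ring
    have h5 := h4.const_mul (g b)
    exact h5.congr_deriv (by ring)


lemma aux_rpow_add_le {x y s : ℝ} (hx : 0 ≤ x) (hy : 0 ≤ y) (hs : 0 ≤ s) :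
    (x + y) ^ s ≤ 2 ^ s * (x ^ s + y ^ s) := by
  have h1 : x + y ≤ 2 * max x y := by
    rcases max_cases x y with ⟨hm, hxy⟩ | ⟨hm, hxy⟩ <;> rw [hm] <;> linarith
  have h2 : (x + y) ^ s ≤ (2 * max x y) ^ s :=
    Real.rpow_le_rpow (by linarith) h1 hs
  have h3 : (2 * max x y) ^ s = 2 ^ s * (max x y) ^ s :=
    Real.mul_rpow (by norm_num) (le_max_iff.2 (Or.inl hx))
  have h4 : (max x y) ^ s ≤ x ^ s + y ^ s := by
    rcases max_cases x y with ⟨hm, _⟩ | ⟨hm, _⟩ <;> rw [hm]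
    · nlinarith [Real.rpow_nonneg hy s]
    · nlinarith [Real.rpow_nonneg hx s]
  calc (x + y) ^ s ≤ 2 ^ s * (max x y) ^ s := by rw [← h3]; exact h2
    _ ≤ 2 ^ s * (x ^ s + y ^ s) := by
        apply mul_le_mul_of_nonneg_left h4 (Real.rpow_nonneg (by norm_num) s)

lemma aux_abs_rpow_le {u v s : ℝ} (h : |u| ≤ |v| + |w|) (hs : 0 ≤ s) :
    |u| ^ s ≤ 2 ^ s * (|v| ^ s + |w| ^ s) :=
  le_trans (Real.rpow_le_rpow (abs_nonneg u) h hs)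
    (aux_rpow_add_le (abs_nonneg v) (abs_nonneg w) hs)

lemma exp_half_le_two : Real.exp (1 / 2) ≤ 2 := by
  have h1 : Real.exp (1 / 2) * Real.exp (1 / 2) = Real.exp 1 := by
    rw [← Real.exp_add]; norm_num
  nlinarith [Real.exp_pos (1 / 2), Real.exp_one_lt_d9]

lemma tw_mul_exp (t d c m b : ℝ) :
    tw t d b * Real.exp (c * (b - m)) = Real.exp (-(c * m)) * tw (t + c) d b := by
  unfold tw
  rw [← Real.exp_add, ← Real.exp_add]
  congr 1
  ring

variable {μ : Measure ℝ} [IsProbabilityMeasure μ]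

lemma integrable_tilt_of (g : ℝ → ℝ) (hg : AEStronglyMeasurable g μ)
    {s D : ℝ} (hs : 0 ≤ s) (hD : ∀ b, |g b| ≤ D * (1 + |b| ^ s))
    {t d : ℝ} (hd : 0 < d) : Integrable g (tiltLQ μ t d) := by
  apply integrable_tiltLQ g hd
  have : (fun b => tw t d b * g b) = fun b => g b * tw t d b := by
    funext b; ring
  rw [this]
  exact integrable_weight g hg hs hD hd

lemma integrable_exp_tilt {t d : ℝ} (hd : 0 < d) (c m : ℝ) :
    Integrable (fun b => Real.exp (c * (b - m))) (tiltLQ μ t d) := by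
  apply integrable_tiltLQ _ hd
  have : (fun b => tw t d b * Real.exp (c * (b - m)))
      = fun b => Real.exp (-(c * m)) * tw (t + c) d b := by
    funext b; exact tw_mul_exp t d c m b
  rw [this]
  exact (integrable_tw hd).const_mul _

lemma integrable_abs_rpow_tilt {t d : ℝ} (hd : 0 < d) {s : ℝ} (hs : 0 ≤ s) (m : ℝ) :
    Integrable (fun b => |b - m| ^ s) (tiltLQ μ t d) := by
  have hcont : Continuous fun b : ℝ => |b - m| ^ s :=
    (Real.continuous_rpow_const hs).comp (continuous_abs.comp
      (continuous_id.sub continuous_const))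
  apply integrable_tilt_of _ hcont.aestronglyMeasurable hs (D := 2 ^ s * (1 + |m| ^ s))
    (fun b => ?_) hd
  rw [abs_of_nonneg (Real.rpow_nonneg (abs_nonneg _) s)]
  have habs : |b - m| ≤ |m| + |b| := by
    have h1 := abs_sub b m
    linarith
  have h := aux_abs_rpow_le (u := b - m) (v := m) (w := b) habs hs
  have h2s : (0:ℝ) < 2 ^ s := Real.rpow_pos_of_pos (by norm_num) s
  have hexp : 2 ^ s * (1 + |m| ^ s) * (1 + |b| ^ s)
      = 2 ^ s * (|m| ^ s + |b| ^ s) + 2 ^ s * (1 + |m| ^ s * |b| ^ s) := by ring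
  have hpos : 0 ≤ 2 ^ s * (1 + |m| ^ s * |b| ^ s) := by
    have := Real.rpow_nonneg (abs_nonneg b) s
    have := Real.rpow_nonneg (abs_nonneg m) s
    positivity
  linarith

lemma central_moment_le {t d K : ℝ} (hd : 0 < d) (hK : 0 < K) {s : ℝ} (hs : 0 ≤ s)
    (hsubg : SubGaussianNormLE (tiltLQ μ t d) K) :
    ∫ b, |b - (∫ y, y ∂(tiltLQ μ t d))| ^ s ∂(tiltLQ μ t d) ≤ 4 * s ^ s * K ^ s := by
  set ρ := tiltLQ μ t d with hρ
  set m := ∫ y, y ∂ρ with hm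
  have hKs : (0:ℝ) < K ^ s := Real.rpow_pos_of_pos hK s
  have hss := aux_rpow_self_pos hs
  have key : ∀ b : ℝ, |b - m| ^ s ≤
      s ^ s * K ^ s * (Real.exp ((1 / K) * (b - m)) + Real.exp (-(1 / K) * (b - m))) := by
    intro b
    have h0 : |b - m| ^ s = K ^ s * (|b - m| / K) ^ s := by
      rw [Real.div_rpow (abs_nonneg _) hK.le]
      field_simp
    have h1 : (|b - m| / K) ^ s ≤ s ^ s * Real.exp (|b - m| / K - s) :=
      aux_rpow_le_exp (by positivity) hs
    have h2 : Real.exp (|b - m| / K - s) ≤ Real.exp (|b - m| / K) := by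
      apply Real.exp_le_exp.2; linarith
    have h3 : Real.exp (|b - m| / K) ≤
        Real.exp ((1 / K) * (b - m)) + Real.exp (-(1 / K) * (b - m)) := by
      have h4 : |b - m| / K = |(b - m) / K| := by
        rw [abs_div, abs_of_pos hK]
      rw [h4, show (1 / K) * (b - m) = (b - m) / K by ring,
        show -(1 / K) * (b - m) = -((b - m) / K) by ring]
      exact Real.exp_abs_le _
    calc |b - m| ^ s = K ^ s * (|b - m| / K) ^ s := h0
      _ ≤ K ^ s * (s ^ s * Real.exp (|b - m| / K - s)) :=
          mul_le_mul_of_nonneg_left h1 hKs.le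
      _ ≤ K ^ s * (s ^ s * Real.exp (|b - m| / K)) := by
          apply mul_le_mul_of_nonneg_left _ hKs.le
          exact mul_le_mul_of_nonneg_left h2 hss.le
      _ ≤ s ^ s * K ^ s * (Real.exp ((1 / K) * (b - m)) + Real.exp (-(1 / K) * (b - m))) := by
          rw [show K ^ s * (s ^ s * Real.exp (|b - m| / K)) =
            s ^ s * K ^ s * Real.exp (|b - m| / K) by ring]
          exact mul_le_mul_of_nonneg_left h3 (by positivity)
  have hint1 : Integrable (fun b => Real.exp ((1 / K) * (b - m))) ρ := integrable_exp_tilt hd _ _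
  have hint2 : Integrable (fun b => Real.exp (-(1 / K) * (b - m))) ρ := integrable_exp_tilt hd _ _
  have hle := integral_mono (integrable_abs_rpow_tilt hd hs m)
    (((hint1.add hint2).const_mul (s ^ s * K ^ s))) key
  simp only [Pi.add_apply] at hle
  have heq : ∫ b, s ^ s * K ^ s *
        (Real.exp ((1 / K) * (b - m)) + Real.exp (-(1 / K) * (b - m))) ∂ρ
      = s ^ s * K ^ s * ((∫ b, Real.exp ((1 / K) * (b - m)) ∂ρ)
        + ∫ b, Real.exp (-(1 / K) * (b - m)) ∂ρ) := by
    rw [integral_const_mul (s ^ s * K ^ s)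
      (fun b => Real.exp ((1 / K) * (b - m)) + Real.exp (-(1 / K) * (b - m))),
      integral_add hint1 hint2]
  rw [heq] at hle
  have hb1 : ∫ b, Real.exp ((1 / K) * (b - m)) ∂ρ ≤ Real.exp (1 / 2) := by
    have := hsubg (1 / K)
    have he : K ^ 2 * (1 / K) ^ 2 / 2 = 1 / 2 := by
      field_simp
    rwa [he] at this
  have hb2 : ∫ b, Real.exp (-(1 / K) * (b - m)) ∂ρ ≤ Real.exp (1 / 2) := by
    have := hsubg (-(1 / K))
    have he : K ^ 2 * (-(1 / K)) ^ 2 / 2 = 1 / 2 := by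
      field_simp
    rwa [he] at this
  have hcalc : s ^ s * K ^ s * ((∫ b, Real.exp ((1 / K) * (b - m)) ∂ρ)
      + ∫ b, Real.exp (-(1 / K) * (b - m)) ∂ρ) ≤ s ^ s * K ^ s * (2 + 2) := by
    apply mul_le_mul_of_nonneg_left _ (by positivity)
    have := exp_half_le_two
    exact add_le_add (hb1.trans this) (hb2.trans this)
  calc ∫ b, |b - m| ^ s ∂ρ ≤ _ := hle
    _ ≤ s ^ s * K ^ s * (2 + 2) := hcalc
    _ = 4 * s ^ s * K ^ s := by ring


lemma rpow_two_abs (b : ℝ) : |b| ^ (2 : ℝ) = b ^ 2 := by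
  rw [show (2 : ℝ) = ((2 : ℕ) : ℝ) by norm_num, Real.rpow_natCast, sq_abs]

/-- first and second weighted moments -/
def M1 (μ : Measure ℝ) (t d : ℝ) : ℝ := ∫ b, b * tw t d b ∂μ
def M2 (μ : Measure ℝ) (t d : ℝ) : ℝ := ∫ b, b ^ 2 * tw t d b ∂μ

lemma abs_id_le (b : ℝ) : |(fun x : ℝ => x) b| ≤ 1 * (1 + |b| ^ (1 : ℝ)) := by
  simp only [Real.rpow_one, one_mul]
  linarith [abs_nonneg b, le_refl |b|]

lemma abs_sq_le (b : ℝ) : |(fun x : ℝ => x ^ 2) b| ≤ 1 * (1 + |b| ^ (2 : ℝ)) := by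
  simp only [rpow_two_abs, one_mul]
  rw [abs_of_nonneg (sq_nonneg b)]
  linarith

lemma abs_one_le (b : ℝ) : |(fun _ : ℝ => (1 : ℝ)) b| ≤ 1 * (1 + |b| ^ (0 : ℝ)) := by
  simp [Real.rpow_zero]

variable {μ : Measure ℝ} [IsProbabilityMeasure μ]

lemma integral_tiltLQ' {t d : ℝ} (hd : 0 < d) (f : ℝ → ℝ) :
    ∫ b, f b ∂(tiltLQ μ t d) = (∫ b, f b * tw t d b ∂μ) / Nc μ t d := by
  rw [integral_tiltLQ hd f, div_eq_inv_mul]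
  congr 1
  have : (fun b => tw t d b * f b) = fun b => f b * tw t d b := by funext b; ring
  rw [this]

lemma integrable_id_tilt {t d : ℝ} (hd : 0 < d) :
    Integrable (fun b : ℝ => b) (tiltLQ μ t d) :=
  integrable_tilt_of _ measurable_id.aestronglyMeasurable (by norm_num) abs_id_le hd

lemma integrable_sq_tilt {t d : ℝ} (hd : 0 < d) :
    Integrable (fun b : ℝ => b ^ 2) (tiltLQ μ t d) :=
  integrable_tilt_of _ (by fun_prop) (by norm_num) abs_sq_le hd

lemma mean_tilt {t d : ℝ} (hd : 0 < d) :
    ∫ y, y ∂(tiltLQ μ t d) = M1 μ t d / Nc μ t d :=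
  integral_tiltLQ' hd _

lemma sq_tilt {t d : ℝ} (hd : 0 < d) :
    ∫ y, y ^ 2 ∂(tiltLQ μ t d) = M2 μ t d / Nc μ t d :=
  integral_tiltLQ' hd _

lemma var_tilt {t d : ℝ} (hd : 0 < d) :
    ∫ b, (b - M1 μ t d / Nc μ t d) ^ 2 ∂(tiltLQ μ t d)
      = M2 μ t d / Nc μ t d - (M1 μ t d / Nc μ t d) ^ 2 := by
  haveI := isProbability_tiltLQ (μ := μ) hd (t := t)
  set m := M1 μ t d / Nc μ t d with hmdef
  have hint1 : Integrable (fun b : ℝ => b) (tiltLQ μ t d) := integrable_id_tilt hd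
  have hint2 : Integrable (fun b : ℝ => b ^ 2) (tiltLQ μ t d) := integrable_sq_tilt hd
  have hexp : (fun b : ℝ => (b - m) ^ 2) = fun b => (b ^ 2 - 2 * m * b) + m ^ 2 := by
    funext b; ring
  have hintm : Integrable (fun b : ℝ => 2 * m * b) (tiltLQ μ t d) := hint1.const_mul (2 * m)
  have hsub2 : Integrable (fun b : ℝ => b ^ 2 - 2 * m * b) (tiltLQ μ t d) := hint2.sub hintm
  rw [hexp, integral_add hsub2 (integrable_const _), integral_sub hint2 hintm,
    integral_const_mul (2 * m) (fun b : ℝ => b), integral_const]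
  have h1 : ∫ b, b ∂(tiltLQ μ t d) = m := mean_tilt hd
  have h2 : ∫ b, b ^ 2 ∂(tiltLQ μ t d) = M2 μ t d / Nc μ t d := sq_tilt hd
  rw [h1, h2]
  simp [measure_univ]
  ring

lemma var_nonneg {t d : ℝ} (hd : 0 < d) :
    0 ≤ M2 μ t d / Nc μ t d - (M1 μ t d / Nc μ t d) ^ 2 := by
  rw [← var_tilt hd]
  exact integral_nonneg fun b => sq_nonneg _

lemma var_le {t d K : ℝ} (hd : 0 < d) (hK : 0 < K)
    (hsubg : SubGaussianNormLE (tiltLQ μ t d) K) :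
    M2 μ t d / Nc μ t d - (M1 μ t d / Nc μ t d) ^ 2 ≤ 16 * K ^ 2 := by
  rw [← var_tilt hd]
  have hc := central_moment_le hd hK (by norm_num : (0:ℝ) ≤ 2) hsubg
  rw [mean_tilt hd] at hc
  have heq : ∫ b, (b - M1 μ t d / Nc μ t d) ^ 2 ∂(tiltLQ μ t d)
      = ∫ b, |b - M1 μ t d / Nc μ t d| ^ (2:ℝ) ∂(tiltLQ μ t d) := by
    congr 1
    funext b
    rw [rpow_two_abs]
  rw [heq]
  have h4 : (2:ℝ) ^ (2:ℝ) = 4 := by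
    rw [show (2:ℝ) = ((2:ℕ):ℝ) by norm_num]
    rw [Real.rpow_natCast]
    norm_num
  have hK2 : K ^ (2:ℝ) = K ^ 2 := by
    rw [show (2:ℝ) = ((2:ℕ):ℝ) by norm_num, Real.rpow_natCast]
  calc ∫ b, |b - M1 μ t d / Nc μ t d| ^ (2:ℝ) ∂(tiltLQ μ t d)
      ≤ 4 * (2:ℝ) ^ (2:ℝ) * K ^ (2:ℝ) := hc
    _ = 16 * K ^ 2 := by rw [h4, hK2]; ring


lemma hasDerivAt_mean {d : ℝ} (hd : 0 < d) (t : ℝ) :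
    HasDerivAt (fun u => M1 μ u d / Nc μ u d)
      (M2 μ t d / Nc μ t d - (M1 μ t d / Nc μ t d) ^ 2) t := by
  have h1 := hasDerivAt_int_t (μ := μ) (fun x => x) measurable_id.aestronglyMeasurable
    (by norm_num : (0:ℝ) ≤ 1) abs_id_le hd t
  have h0 := hasDerivAt_int_t (μ := μ) (fun _ => (1:ℝ)) aestronglyMeasurable_const
    le_rfl abs_one_le hd t
  have hN : HasDerivAt (fun u => Nc μ u d) (M1 μ t d) t := by
    simpa [Nc, M1, one_mul] using h0
  have hM1 : HasDerivAt (fun u => M1 μ u d) (M2 μ t d) t := by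
    simpa [M1, M2, pow_two] using h1
  have hNpos := Nc_pos (μ := μ) hd (t := t)
  have hdiv := hM1.div hN (ne_of_gt hNpos)
  refine hdiv.congr_deriv ?_
  field_simp

lemma mean_bound_poly {C d : ℝ} (hd : 0 < d) (hC : 0 < C)
    (hm0 : |∫ b, b ∂(tiltLQ μ 0 d)| ≤ C)
    (hsubd : ∀ u : ℝ, SubGaussianNormLE (tiltLQ μ u d) (C * (1 + |u|))) (t : ℝ) :
    |M1 μ t d / Nc μ t d| ≤ (C + 16 * C ^ 2) * (1 + |t|) ^ 3 := by
  have h1t : (1:ℝ) ≤ 1 + |t| := by linarith [abs_nonneg t]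
  set f := fun u => M1 μ u d / Nc μ u d with hfdef
  have hf0 : |f 0| ≤ C := by
    have he : f 0 = ∫ b, b ∂(tiltLQ μ 0 d) := (mean_tilt hd).symm
    rw [he]; exact hm0
  have hB : ∀ u ∈ Set.uIcc (0:ℝ) t,
      ‖M2 μ u d / Nc μ u d - (M1 μ u d / Nc μ u d) ^ 2‖ ≤ 16 * C ^ 2 * (1 + |t|) ^ 2 := by
    intro u hu
    have huabs : |u| ≤ |t| := by
      rcases Set.mem_uIcc.mp hu with ⟨h1, h2⟩ | ⟨h1, h2⟩
      · rw [abs_of_nonneg h1]; exact h2.trans (le_abs_self t)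
      · rw [abs_of_nonpos h2]
        calc -u ≤ -t := by linarith
          _ ≤ |t| := neg_le_abs t
    have hvn := var_nonneg (μ := μ) hd (t := u)
    have hvle := var_le hd (K := C * (1 + |u|)) (by positivity) (hsubd u)
    rw [Real.norm_eq_abs, abs_of_nonneg hvn]
    calc M2 μ u d / Nc μ u d - (M1 μ u d / Nc μ u d) ^ 2
        ≤ 16 * (C * (1 + |u|)) ^ 2 := hvle
      _ = 16 * C ^ 2 * (1 + |u|) ^ 2 := by ring
      _ ≤ 16 * C ^ 2 * (1 + |t|) ^ 2 := by
          have h2 : (1 + |u|) ^ 2 ≤ (1 + |t|) ^ 2 := by nlinarith [abs_nonneg u]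
          nlinarith [sq_nonneg C]
  have hderiv : ∀ u ∈ Set.uIcc (0:ℝ) t,
      HasDerivWithinAt f (M2 μ u d / Nc μ u d - (M1 μ u d / Nc μ u d) ^ 2)
        (Set.uIcc (0:ℝ) t) u :=
    fun u _ => (hasDerivAt_mean hd u).hasDerivWithinAt
  have hmvt := (convex_uIcc (0:ℝ) t).norm_image_sub_le_of_norm_hasDerivWithin_le
    hderiv hB Set.left_mem_uIcc Set.right_mem_uIcc
  rw [Real.norm_eq_abs, Real.norm_eq_abs, sub_zero] at hmvt
  have habs : |f t| ≤ |f 0| + 16 * C ^ 2 * (1 + |t|) ^ 2 * |t| := by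
    have h := abs_sub_abs_le_abs_sub (f t) (f 0)
    linarith
  have hge1 : (1:ℝ) ≤ (1 + |t|) ^ 3 := by
    calc (1:ℝ) = 1 ^ 3 := by norm_num
      _ ≤ (1 + |t|) ^ 3 := pow_le_pow_left₀ zero_le_one h1t 3
  have e1 : C ≤ C * (1 + |t|) ^ 3 := by
    have := mul_le_mul_of_nonneg_left hge1 hC.le
    linarith
  have e2 : 16 * C ^ 2 * (1 + |t|) ^ 2 * |t| ≤ 16 * C ^ 2 * (1 + |t|) ^ 3 := by
    have hr : 16 * C ^ 2 * (1 + |t|) ^ 3 - 16 * C ^ 2 * (1 + |t|) ^ 2 * |t|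
        = 16 * C ^ 2 * (1 + |t|) ^ 2 := by ring
    have hp : (0:ℝ) ≤ 16 * C ^ 2 * (1 + |t|) ^ 2 := by positivity
    linarith
  calc |M1 μ t d / Nc μ t d| = |f t| := rfl
    _ ≤ C * (1 + |t|) ^ 3 + 16 * C ^ 2 * (1 + |t|) ^ 3 := by linarith
    _ = (C + 16 * C ^ 2) * (1 + |t|) ^ 3 := by ring

lemma smom_bound {C d : ℝ} (hd : 0 < d) (hC : 0 < C)
    (hm0 : |∫ b, b ∂(tiltLQ μ 0 d)| ≤ C)
    (hsubd : ∀ u : ℝ, SubGaussianNormLE (tiltLQ μ u d) (C * (1 + |u|))) (t : ℝ) :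
    M2 μ t d / Nc μ t d ≤ (16 * C ^ 2 + (C + 16 * C ^ 2) ^ 2) * (1 + |t|) ^ 6 := by
  have h1t : (1:ℝ) ≤ 1 + |t| := by linarith [abs_nonneg t]
  have hvar := var_le hd (K := C * (1 + |t|)) (by positivity) (hsubd t)
  have hm := mean_bound_poly hd hC hm0 hsubd t
  have hm2 : (M1 μ t d / Nc μ t d) ^ 2 ≤ (C + 16 * C ^ 2) ^ 2 * (1 + |t|) ^ 6 := by
    have h := pow_le_pow_left₀ (abs_nonneg _) hm 2
    rw [sq_abs] at h
    calc (M1 μ t d / Nc μ t d) ^ 2 ≤ ((C + 16 * C ^ 2) * (1 + |t|) ^ 3) ^ 2 := h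
      _ = (C + 16 * C ^ 2) ^ 2 * (1 + |t|) ^ 6 := by ring
  have h26 : (1 + |t|) ^ 2 ≤ (1 + |t|) ^ 6 := pow_le_pow_right₀ h1t (by norm_num)
  have hvar' : M2 μ t d / Nc μ t d - (M1 μ t d / Nc μ t d) ^ 2
      ≤ 16 * C ^ 2 * (1 + |t|) ^ 6 := by
    calc M2 μ t d / Nc μ t d - (M1 μ t d / Nc μ t d) ^ 2 ≤ 16 * (C * (1 + |t|)) ^ 2 := hvar
      _ = 16 * C ^ 2 * (1 + |t|) ^ 2 := by ring
      _ ≤ 16 * C ^ 2 * (1 + |t|) ^ 6 := by nlinarith [sq_nonneg C]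
  nlinarith [sq_nonneg (M1 μ t d / Nc μ t d)]

lemma moment_bound {C d : ℝ} (hd : 0 < d) (hC : 0 < C)
    (hm0 : |∫ b, b ∂(tiltLQ μ 0 d)| ≤ C)
    (hsubd : ∀ u : ℝ, SubGaussianNormLE (tiltLQ μ u d) (C * (1 + |u|)))
    (t : ℝ) {s : ℝ} (hs : 0 ≤ s) :
    ∫ b, |b| ^ s ∂(tiltLQ μ t d)
      ≤ 2 ^ s * (((C + 16 * C ^ 2) * (1 + |t|) ^ 3) ^ s + 4 * s ^ s * (C * (1 + |t|)) ^ s) := by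
  haveI := isProbability_tiltLQ (μ := μ) hd (t := t)
  set m := ∫ y, y ∂(tiltLQ μ t d) with hmdef
  have hint_c : Integrable (fun b => |b - m| ^ s) (tiltLQ μ t d) :=
    integrable_abs_rpow_tilt hd hs m
  have hint_l : Integrable (fun b : ℝ => |b| ^ s) (tiltLQ μ t d) := by
    have := integrable_abs_rpow_tilt (μ := μ) hd hs 0 (t := t)
    simpa using this
  have hkey : ∀ b : ℝ, |b| ^ s ≤ 2 ^ s * (|m| ^ s + |b - m| ^ s) := by
    intro b
    apply aux_abs_rpow_le (u := b) (v := m) (w := b - m) _ hs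
    have := abs_add_le m (b - m)
    simpa using this
  have hmono := integral_mono hint_l
    (((integrable_const (|m| ^ s)).add hint_c).const_mul (2 ^ s)) hkey
  have hrhs : ∫ b, 2 ^ s * (|m| ^ s + |b - m| ^ s) ∂(tiltLQ μ t d)
      = 2 ^ s * (|m| ^ s + ∫ b, |b - m| ^ s ∂(tiltLQ μ t d)) := by
    rw [integral_const_mul ((2:ℝ) ^ s) (fun b => |m| ^ s + |b - m| ^ s),
      integral_add (integrable_const _) hint_c, integral_const]
    simp [measure_univ]
  have hcm := central_moment_le hd (K := C * (1 + |t|)) (by positivity) hs (hsubd t)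
  have hmb : |m| ≤ (C + 16 * C ^ 2) * (1 + |t|) ^ 3 := by
    rw [hmdef, mean_tilt hd]
    exact mean_bound_poly hd hC hm0 hsubd t
  have hmbs : |m| ^ s ≤ ((C + 16 * C ^ 2) * (1 + |t|) ^ 3) ^ s :=
    Real.rpow_le_rpow (abs_nonneg m) hmb hs
  have h2s : (0:ℝ) ≤ 2 ^ s := (Real.rpow_pos_of_pos (by norm_num) s).le
  calc ∫ b, |b| ^ s ∂(tiltLQ μ t d) ≤ _ := hmono
    _ = 2 ^ s * (|m| ^ s + ∫ b, |b - m| ^ s ∂(tiltLQ μ t d)) := by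
        simpa [Pi.add_apply] using hrhs
    _ ≤ 2 ^ s * (((C + 16 * C ^ 2) * (1 + |t|) ^ 3) ^ s + 4 * s ^ s * (C * (1 + |t|)) ^ s) := by
        apply mul_le_mul_of_nonneg_left _ h2s
        exact add_le_add hmbs (by
          calc ∫ b, |b - m| ^ s ∂(tiltLQ μ t d) ≤ 4 * s ^ s * (C * (1 + |t|)) ^ s := hcm)


lemma aux_pow6 (y : ℝ) (hy : 0 ≤ y) : (1 + y) ^ 6 ≤ 64 * (1 + y ^ 6) := by
  rcases le_total y 1 with hy1 | hy1
  · have h : (1 + y) ^ 6 ≤ 2 ^ 6 := pow_le_pow_left₀ (by linarith) (by linarith) 6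
    nlinarith [pow_nonneg hy 6]
  · have h : (1 + y) ^ 6 ≤ (2 * y) ^ 6 := pow_le_pow_left₀ (by linarith) (by linarith) 6
    nlinarith [pow_nonneg hy 6]

lemma aux_one_add_rpow {y p : ℝ} (hy : 0 ≤ y) (hp : 0 ≤ p) :
    (1 + y) ^ p ≤ 2 ^ p * (1 + y ^ p) := by
  have h2p : (0:ℝ) < 2 ^ p := Real.rpow_pos_of_pos (by norm_num) p
  rcases le_total y 1 with hy1 | hy1
  · have h : (1 + y) ^ p ≤ 2 ^ p := Real.rpow_le_rpow (by linarith) (by linarith) hp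
    nlinarith [Real.rpow_nonneg hy p]
  · have h : (1 + y) ^ p ≤ (2 * y) ^ p := Real.rpow_le_rpow (by linarith) (by linarith) hp
    rw [Real.mul_rpow (by norm_num) (by linarith)] at h
    nlinarith [Real.rpow_nonneg hy p]

lemma abs_rpow_add_two (b : ℝ) {r : ℝ} (hr : 0 < r) : |b| ^ (r + 2) = |b| ^ r * b ^ 2 := by
  rw [Real.rpow_add' (abs_nonneg b) (by linarith), rpow_two_abs]

variable {μ : Measure ℝ} [IsProbabilityMeasure μ]

lemma abs_int_le {ν : Measure ℝ} (f : ℝ → ℝ) : |∫ b, f b ∂ν| ≤ ∫ b, |f b| ∂ν := by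
  simpa [Real.norm_eq_abs] using norm_integral_le_integral_norm (μ := ν) f

lemma M2_nonneg (t d : ℝ) : 0 ≤ M2 μ t d :=
  integral_nonneg fun b => mul_nonneg (sq_nonneg b) (tw_pos t d b).le

lemma hasDerivAt_Nc_d {t c d : ℝ} (hc : 0 < c) (hcd : c < d) :
    HasDerivAt (fun x => Nc μ t x) (-(1:ℝ) / 2 * M2 μ t d) d := by
  have h0 := hasDerivAt_int_d (μ := μ) (fun _ => (1:ℝ)) aestronglyMeasurable_const
    le_rfl abs_one_le (t := t) hc hcd
  have hfun : (fun y => ∫ b, (fun _ : ℝ => (1:ℝ)) b * tw t y b ∂μ) = fun y => Nc μ t y := by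
    funext y; simp only [one_mul]; rfl
  have hval : (∫ b, ((fun _ : ℝ => (1:ℝ)) b * (-(b ^ 2) / 2)) * tw t d b ∂μ)
      = -(1:ℝ) / 2 * M2 μ t d := by
    calc ∫ b, ((fun _ : ℝ => (1:ℝ)) b * (-(b ^ 2) / 2)) * tw t d b ∂μ
        = ∫ b, (-(1:ℝ) / 2) * (b ^ 2 * tw t d b) ∂μ := by congr 1; funext b; ring
      _ = -(1:ℝ) / 2 * M2 μ t d := by rw [integral_const_mul]; rfl
  rw [← hfun, ← hval]
  exact h0

lemma moment_bound' {C d : ℝ} (hd : 0 < d) (hC : 0 < C)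
    (hm0 : |∫ b, b ∂(tiltLQ μ 0 d)| ≤ C)
    (hsubd : ∀ u : ℝ, SubGaussianNormLE (tiltLQ μ u d) (C * (1 + |u|)))
    (t : ℝ) {s : ℝ} (hs : 0 ≤ s) :
    ∫ b, |b| ^ s ∂(tiltLQ μ t d)
      ≤ (2 ^ s * ((C + 16 * C ^ 2) ^ s + 4 * s ^ s * C ^ s)) * (1 + |t|) ^ (3 * s) := by
  have h1t : (1:ℝ) ≤ 1 + |t| := by linarith [abs_nonneg t]
  have hCM : (0:ℝ) < C + 16 * C ^ 2 := by positivity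
  refine (moment_bound hd hC hm0 hsubd t hs).trans ?_
  have e1 : ((C + 16 * C ^ 2) * (1 + |t|) ^ 3) ^ s
      = (C + 16 * C ^ 2) ^ s * (1 + |t|) ^ (3 * s) := by
    rw [Real.mul_rpow hCM.le (by positivity)]
    congr 1
    rw [← Real.rpow_natCast (1 + |t|) 3, ← Real.rpow_mul (by linarith)]
    norm_num
  have e2 : (C * (1 + |t|)) ^ s ≤ C ^ s * (1 + |t|) ^ (3 * s) := by
    rw [Real.mul_rpow hC.le (by linarith)]
    apply mul_le_mul_of_nonneg_left _ (Real.rpow_nonneg hC.le s)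
    exact Real.rpow_le_rpow_of_exponent_le h1t (by linarith)
  have hss := aux_rpow_self_pos hs
  have h2s : (0:ℝ) ≤ 2 ^ s := (Real.rpow_pos_of_pos (by norm_num) s).le
  calc 2 ^ s * (((C + 16 * C ^ 2) * (1 + |t|) ^ 3) ^ s + 4 * s ^ s * (C * (1 + |t|)) ^ s)
      = 2 ^ s * ((C + 16 * C ^ 2) ^ s * (1 + |t|) ^ (3 * s) + 4 * s ^ s * (C * (1 + |t|)) ^ s) := by
        rw [e1]
    _ ≤ 2 ^ s * ((C + 16 * C ^ 2) ^ s * (1 + |t|) ^ (3 * s)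
          + 4 * s ^ s * (C ^ s * (1 + |t|) ^ (3 * s))) := by
        apply mul_le_mul_of_nonneg_left _ h2s
        apply add_le_add le_rfl
        apply mul_le_mul_of_nonneg_left e2 (by positivity)
    _ = (2 ^ s * ((C + 16 * C ^ 2) ^ s + 4 * s ^ s * C ^ s)) * (1 + |t|) ^ (3 * s) := by ring

lemma Nc_deriv_bound {C t d : ℝ} (hd : 0 < d) (hC : 0 < C)
    (hm0 : |∫ b, b ∂(tiltLQ μ 0 d)| ≤ C)
    (hsubd : ∀ u : ℝ, SubGaussianNormLE (tiltLQ μ u d) (C * (1 + |u|))) :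
    |(-(1:ℝ) / 2 * M2 μ t d) / Nc μ t d|
      ≤ (16 * C ^ 2 + (C + 16 * C ^ 2) ^ 2) / 2 * (1 + |t|) ^ 6 := by
  have hNpos := Nc_pos (μ := μ) hd (t := t)
  have hM2 := M2_nonneg (μ := μ) t d
  have hsm := smom_bound hd hC hm0 hsubd t
  have he : |(-(1:ℝ) / 2 * M2 μ t d) / Nc μ t d| = 1 / 2 * (M2 μ t d / Nc μ t d) := by
    rw [abs_div, abs_of_pos hNpos, abs_mul, abs_of_nonneg hM2]
    rw [show |(-(1:ℝ) / 2)| = 1 / 2 by norm_num]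
    ring
  rw [he]
  calc 1 / 2 * (M2 μ t d / Nc μ t d)
      ≤ 1 / 2 * ((16 * C ^ 2 + (C + 16 * C ^ 2) ^ 2) * (1 + |t|) ^ 6) := by linarith
    _ = (16 * C ^ 2 + (C + 16 * C ^ 2) ^ 2) / 2 * (1 + |t|) ^ 6 := by ring

lemma Mh_ratio_bound {C d r : ℝ} (hd : 0 < d) (hC : 0 < C)
    (hm0 : |∫ b, b ∂(tiltLQ μ 0 d)| ≤ C)
    (hsubd : ∀ u : ℝ, SubGaussianNormLE (tiltLQ μ u d) (C * (1 + |u|)))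
    (t : ℝ) (hr : 0 < r) (h : ℝ → ℝ) (hmeas : Measurable h)
    (hgrow : ∀ b, |h b| ≤ 1 + |b| ^ r) :
    |∫ b, h b * tw t d b ∂μ| / Nc μ t d
      ≤ 1 + (2 ^ r * ((C + 16 * C ^ 2) ^ r + 4 * r ^ r * C ^ r)) * (1 + |t|) ^ (3 * r) := by
  have hNpos := Nc_pos (μ := μ) hd (t := t)
  have hgrow' : ∀ b, |h b| ≤ 1 * (1 + |b| ^ r) := fun b => by rw [one_mul]; exact hgrow b
  have habs_r : ∀ b : ℝ, |(fun x : ℝ => |x| ^ r) b| ≤ 1 * (1 + |b| ^ r) := fun b => by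
    rw [one_mul, abs_of_nonneg (Real.rpow_nonneg (abs_nonneg b) r)]
    nlinarith [Real.rpow_nonneg (abs_nonneg b) r]
  have hmr : Measurable fun b : ℝ => |b| ^ r :=
    ((Real.continuous_rpow_const hr.le).comp continuous_abs).measurable
  have hint_r : Integrable (fun b => |b| ^ r * tw t d b) μ :=
    integrable_weight _ hmr.aestronglyMeasurable hr.le habs_r hd
  have hint_1r : Integrable (fun b => (1 + |b| ^ r) * tw t d b) μ := by
    have heq : (fun b : ℝ => (1 + |b| ^ r) * tw t d b)
        = fun b => tw t d b + |b| ^ r * tw t d b := by funext b; ring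
    rw [heq]
    exact (integrable_tw hd).add hint_r
  have h1 : |∫ b, h b * tw t d b ∂μ| ≤ ∫ b, (1 + |b| ^ r) * tw t d b ∂μ := by
    calc |∫ b, h b * tw t d b ∂μ| ≤ ∫ b, |h b * tw t d b| ∂μ :=
          abs_int_le _
      _ ≤ ∫ b, (1 + |b| ^ r) * tw t d b ∂μ := by
          apply integral_mono (integrable_weight h hmeas.aestronglyMeasurable hr.le hgrow' hd).abs
            hint_1r
          intro b
          show |h b * tw t d b| ≤ (1 + |b| ^ r) * tw t d b
          rw [abs_mul, abs_of_pos (tw_pos t d b)]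
          exact mul_le_mul_of_nonneg_right (hgrow b) (tw_pos t d b).le
  have h2 : (∫ b, (1 + |b| ^ r) * tw t d b ∂μ)
      = Nc μ t d + ∫ b, |b| ^ r * tw t d b ∂μ := by
    have heq : (fun b : ℝ => (1 + |b| ^ r) * tw t d b)
        = fun b => tw t d b + |b| ^ r * tw t d b := by funext b; ring
    rw [heq, integral_add (integrable_tw hd) hint_r]
    rfl
  have h3 : (∫ b, |b| ^ r * tw t d b ∂μ) / Nc μ t d = ∫ b, |b| ^ r ∂(tiltLQ μ t d) :=
    (integral_tiltLQ' hd _).symm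
  have h4 := (div_le_div_iff_of_pos_right hNpos).mpr (h1.trans_eq h2)
  calc |∫ b, h b * tw t d b ∂μ| / Nc μ t d
      ≤ (Nc μ t d + ∫ b, |b| ^ r * tw t d b ∂μ) / Nc μ t d := h4
    _ = 1 + (∫ b, |b| ^ r * tw t d b ∂μ) / Nc μ t d := by
        rw [add_div, div_self (ne_of_gt hNpos)]
    _ = 1 + ∫ b, |b| ^ r ∂(tiltLQ μ t d) := by rw [h3]
    _ ≤ 1 + (2 ^ r * ((C + 16 * C ^ 2) ^ r + 4 * r ^ r * C ^ r)) * (1 + |t|) ^ (3 * r) := by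
        have := moment_bound' hd hC hm0 hsubd t hr.le
        linarith

lemma Mh'_ratio_bound {C d r : ℝ} (hd : 0 < d) (hC : 0 < C)
    (hm0 : |∫ b, b ∂(tiltLQ μ 0 d)| ≤ C)
    (hsubd : ∀ u : ℝ, SubGaussianNormLE (tiltLQ μ u d) (C * (1 + |u|)))
    (t : ℝ) (hr : 0 < r) (h : ℝ → ℝ) (hmeas : Measurable h)
    (hgrow : ∀ b, |h b| ≤ 1 + |b| ^ r) :
    |∫ b, (h b * (-(b ^ 2) / 2)) * tw t d b ∂μ| / Nc μ t d
      ≤ 1 / 2 * ((16 * C ^ 2 + (C + 16 * C ^ 2) ^ 2) * (1 + |t|) ^ 6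
          + (2 ^ (r + 2) * ((C + 16 * C ^ 2) ^ (r + 2) + 4 * (r + 2) ^ (r + 2) * C ^ (r + 2)))
            * (1 + |t|) ^ (3 * (r + 2))) := by
  have hNpos := Nc_pos (μ := μ) hd (t := t)
  have hr2 : (0:ℝ) < r + 2 := by linarith
  have habs_r2 : ∀ b : ℝ, |(fun x : ℝ => |x| ^ (r + 2)) b| ≤ 1 * (1 + |b| ^ (r + 2)) :=
    fun b => by
      rw [one_mul, abs_of_nonneg (Real.rpow_nonneg (abs_nonneg b) _)]
      nlinarith [Real.rpow_nonneg (abs_nonneg b) (r + 2)]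
  have hmr2 : Measurable fun b : ℝ => |b| ^ (r + 2) :=
    ((Real.continuous_rpow_const hr2.le).comp continuous_abs).measurable
  have hint_r2 : Integrable (fun b => |b| ^ (r + 2) * tw t d b) μ :=
    integrable_weight _ hmr2.aestronglyMeasurable hr2.le habs_r2 hd
  have hint_sq : Integrable (fun b : ℝ => b ^ 2 * tw t d b) μ := by
    apply integrable_weight (fun b : ℝ => b ^ 2) (by fun_prop) (by norm_num : (0:ℝ) ≤ 2)
      abs_sq_le hd
  have hint_rhs : Integrable
      (fun b => 1 / 2 * (b ^ 2 * tw t d b) + 1 / 2 * (|b| ^ (r + 2) * tw t d b)) μ :=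
    (hint_sq.const_mul _).add (hint_r2.const_mul _)
  have h1 : |∫ b, (h b * (-(b ^ 2) / 2)) * tw t d b ∂μ|
      ≤ ∫ b, 1 / 2 * (b ^ 2 * tw t d b) + 1 / 2 * (|b| ^ (r + 2) * tw t d b) ∂μ := by
    calc |∫ b, (h b * (-(b ^ 2) / 2)) * tw t d b ∂μ|
        ≤ ∫ b, |(h b * (-(b ^ 2) / 2)) * tw t d b| ∂μ := abs_int_le _
      _ ≤ ∫ b, 1 / 2 * (b ^ 2 * tw t d b) + 1 / 2 * (|b| ^ (r + 2) * tw t d b) ∂μ := by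
          apply integral_mono _ hint_rhs
          · intro b
            show |(h b * (-(b ^ 2) / 2)) * tw t d b| ≤ _
            have hb2 : |(-(b ^ 2) / 2)| = b ^ 2 / 2 := by
              rw [abs_div, abs_neg, abs_of_nonneg (sq_nonneg b)]
              norm_num
            rw [abs_mul, abs_mul, hb2, abs_of_pos (tw_pos t d b)]
            have hpt : |h b| * (b ^ 2 / 2) ≤ (1 + |b| ^ r) * (b ^ 2 / 2) :=
              mul_le_mul_of_nonneg_right (hgrow b) (by positivity)
            have hexp : (1 + |b| ^ r) * (b ^ 2 / 2) * tw t d b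
                = 1 / 2 * (b ^ 2 * tw t d b) + 1 / 2 * (|b| ^ (r + 2) * tw t d b) := by
              rw [abs_rpow_add_two b hr]
              ring
            calc |h b| * (b ^ 2 / 2) * tw t d b
                ≤ (1 + |b| ^ r) * (b ^ 2 / 2) * tw t d b :=
                  mul_le_mul_of_nonneg_right hpt (tw_pos t d b).le
              _ = _ := hexp
          · apply Integrable.abs
            apply integrable_weight (fun b => h b * (-(b ^ 2) / 2))
              (hmeas.aestronglyMeasurable.mul
                ((by fun_prop : Measurable fun b : ℝ => -(b ^ 2) / 2).aestronglyMeasurable))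
              (by linarith : (0:ℝ) ≤ r + 2)
              (D := 1) (fun b => ?_) hd
            rw [one_mul, abs_mul]
            have hb2 : |(-(b ^ 2) / 2)| = b ^ 2 / 2 := by
              rw [abs_div, abs_neg, abs_of_nonneg (sq_nonneg b)]
              norm_num
            rw [hb2]
            have h1 : |h b| * (b ^ 2 / 2) ≤ (1 + |b| ^ r) * (b ^ 2 / 2) :=
              mul_le_mul_of_nonneg_right (hgrow b) (by positivity)
            have h2 : (1 + |b| ^ r) * (b ^ 2 / 2) ≤ 1 + |b| ^ (r + 2) := by
              rw [abs_rpow_add_two b hr]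
              have hb1 : b ^ 2 / 2 ≤ 1 + |b| ^ r * b ^ 2 / 2 := by
                have : b ^ 2 ≤ 1 + |b| ^ r * b ^ 2 := by
                  rcases le_total (b ^ 2) 1 with hb | hb
                  · nlinarith [mul_nonneg (Real.rpow_nonneg (abs_nonneg b) r) (sq_nonneg b)]
                  · have hb1 : (1:ℝ) ≤ |b| := by
                      nlinarith [abs_nonneg b, sq_abs b]
                    have : (1:ℝ) ≤ |b| ^ r := Real.one_le_rpow hb1 hr.le
                    nlinarith [sq_nonneg b]
                linarith
              nlinarith [Real.rpow_nonneg (abs_nonneg b) r, sq_nonneg b]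
            linarith
  have h2 : (∫ b, 1 / 2 * (b ^ 2 * tw t d b) + 1 / 2 * (|b| ^ (r + 2) * tw t d b) ∂μ)
      = 1 / 2 * M2 μ t d + 1 / 2 * ∫ b, |b| ^ (r + 2) * tw t d b ∂μ := by
    rw [integral_add (hint_sq.const_mul _) (hint_r2.const_mul _), integral_const_mul,
      integral_const_mul]
    rfl
  have h3 : (∫ b, |b| ^ (r + 2) * tw t d b ∂μ) / Nc μ t d
      = ∫ b, |b| ^ (r + 2) ∂(tiltLQ μ t d) := (integral_tiltLQ' hd _).symm
  have hsm := smom_bound hd hC hm0 hsubd t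
  have hmom := moment_bound' hd hC hm0 hsubd t (le_of_lt hr2)
  have h4 := (div_le_div_iff_of_pos_right hNpos).mpr (h1.trans_eq h2)
  have h5 : (1 / 2 * M2 μ t d + 1 / 2 * ∫ b, |b| ^ (r + 2) * tw t d b ∂μ) / Nc μ t d
      = 1 / 2 * (M2 μ t d / Nc μ t d)
        + 1 / 2 * ((∫ b, |b| ^ (r + 2) * tw t d b ∂μ) / Nc μ t d) := by
    field_simp
  calc |∫ b, (h b * (-(b ^ 2) / 2)) * tw t d b ∂μ| / Nc μ t d
      ≤ (1 / 2 * M2 μ t d + 1 / 2 * ∫ b, |b| ^ (r + 2) * tw t d b ∂μ) / Nc μ t d := h4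
    _ = 1 / 2 * (M2 μ t d / Nc μ t d)
        + 1 / 2 * ((∫ b, |b| ^ (r + 2) * tw t d b ∂μ) / Nc μ t d) := h5
    _ ≤ _ := by
        rw [h3]
        have := hmom
        have h6 : ∫ b, |b| ^ (r + 2) ∂(tiltLQ μ t d)
            ≤ (2 ^ (r + 2) * ((C + 16 * C ^ 2) ^ (r + 2)
              + 4 * (r + 2) ^ (r + 2) * C ^ (r + 2))) * (1 + |t|) ^ (3 * (r + 2)) := this
        linarith

set_option maxHeartbeats 1000000 in
/-- **Stability of linear-quadratic tilts in the quadratic parameter.**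
Under the same tilt regularity conditions: (i) the log-normalizing constants are Lipschitz in
`d` with constant of order `1 + |t|⁶`; and (ii) tilted expectations of functions of polynomial
growth of order `r` are Lipschitz in `d` with constant of order `1 + |t|^{3(r+2)}`. -/
theorem stmt_9 (μ : Measure ℝ) (hμ : IsProbabilityMeasure μ)
    (d0 eps C : ℝ) (hd0 : 0 < d0) (heps : 0 < eps) (hepsle : eps < d0 / 2) (hC : 0 < C)
    (hmean : ∀ d ∈ Set.Ioo (d0 - eps) (d0 + eps), |∫ b, b ∂(tiltLQ μ 0 d)| ≤ C)
    (hsub : ∀ d ∈ Set.Ioo (d0 - eps) (d0 + eps), ∀ t : ℝ,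
      SubGaussianNormLE (tiltLQ μ t d) (C * (1 + |t|))) :
    (∃ K : ℝ, 0 < K ∧ ∀ t : ℝ, ∀ d ∈ Set.Ioo (d0 - eps) (d0 + eps),
      ∀ d' ∈ Set.Ioo (d0 - eps) (d0 + eps),
        |Real.log (∫ b, Real.exp (t * b - d * b ^ 2 / 2) ∂μ)
            - Real.log (∫ b, Real.exp (t * b - d' * b ^ 2 / 2) ∂μ)|
          ≤ K * |d - d'| * (1 + |t| ^ (6 : ℕ))) ∧
    (∀ r : ℝ, 0 < r → ∃ Kr : ℝ, 0 < Kr ∧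
      ∀ h : ℝ → ℝ, Measurable h → (∀ b : ℝ, |h b| ≤ 1 + |b| ^ r) →
      ∀ t : ℝ, ∀ d ∈ Set.Ioo (d0 - eps) (d0 + eps), ∀ d' ∈ Set.Ioo (d0 - eps) (d0 + eps),
        |(∫ b, h b ∂(tiltLQ μ t d)) - ∫ b, h b ∂(tiltLQ μ t d')|
          ≤ Kr * |d - d'| * (1 + |t| ^ (3 * (r + 2)))) := by
  haveI := hμ
  have hc0 : (0:ℝ) < d0 - eps := by linarith
  constructor
  · -- Part (i)
    refine ⟨32 * (16 * C ^ 2 + (C + 16 * C ^ 2) ^ 2), by positivity, ?_⟩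
    intro t d hdI d' hdI'
    have key : ∀ x ∈ Set.Ioo (d0 - eps) (d0 + eps),
        HasDerivWithinAt (fun y => Real.log (Nc μ t y))
          ((-(1:ℝ) / 2 * M2 μ t x) / Nc μ t x) (Set.Ioo (d0 - eps) (d0 + eps)) x := by
      intro x hx
      have hx0 : (0:ℝ) < x := lt_trans hc0 hx.1
      exact ((hasDerivAt_Nc_d hc0 hx.1).log
        (ne_of_gt (Nc_pos (μ := μ) hx0 (t := t)))).hasDerivWithinAt
    have hbound : ∀ x ∈ Set.Ioo (d0 - eps) (d0 + eps),
        ‖(-(1:ℝ) / 2 * M2 μ t x) / Nc μ t x‖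
          ≤ (16 * C ^ 2 + (C + 16 * C ^ 2) ^ 2) / 2 * (1 + |t|) ^ 6 := by
      intro x hx
      have hx0 : (0:ℝ) < x := lt_trans hc0 hx.1
      rw [Real.norm_eq_abs]
      exact Nc_deriv_bound hx0 hC (hmean x hx) (hsub x hx)
    have hmvt := (convex_Ioo (d0 - eps) (d0 + eps)).norm_image_sub_le_of_norm_hasDerivWithin_le
      key hbound hdI' hdI
    rw [Real.norm_eq_abs, Real.norm_eq_abs] at hmvt
    have h6 := aux_pow6 |t| (abs_nonneg t)
    have hBn : (0:ℝ) ≤ (16 * C ^ 2 + (C + 16 * C ^ 2) ^ 2) / 2 := by positivity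
    show |Real.log (Nc μ t d) - Real.log (Nc μ t d')|
      ≤ 32 * (16 * C ^ 2 + (C + 16 * C ^ 2) ^ 2) * |d - d'| * (1 + |t| ^ (6:ℕ))
    calc |Real.log (Nc μ t d) - Real.log (Nc μ t d')|
        ≤ (16 * C ^ 2 + (C + 16 * C ^ 2) ^ 2) / 2 * (1 + |t|) ^ 6 * |d - d'| := hmvt
      _ ≤ (16 * C ^ 2 + (C + 16 * C ^ 2) ^ 2) / 2 * (64 * (1 + |t| ^ (6:ℕ))) * |d - d'| := by
          apply mul_le_mul_of_nonneg_right _ (abs_nonneg _)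
          exact mul_le_mul_of_nonneg_left h6 hBn
      _ = 32 * (16 * C ^ 2 + (C + 16 * C ^ 2) ^ 2) * |d - d'| * (1 + |t| ^ (6:ℕ)) := by ring
  · -- Part (ii)
    intro r hr
    have hr2 : (0:ℝ) < r + 2 := by linarith
    have hCV : (0:ℝ) < 16 * C ^ 2 + (C + 16 * C ^ 2) ^ 2 := by positivity
    have hrr : (0:ℝ) < r ^ r := Real.rpow_pos_of_pos hr r
    have hrr2 : (0:ℝ) < (r + 2) ^ (r + 2) := Real.rpow_pos_of_pos hr2 (r + 2)
    have hΛr : (0:ℝ) < 2 ^ r * ((C + 16 * C ^ 2) ^ r + 4 * r ^ r * C ^ r) := by positivity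
    have hΛr2 : (0:ℝ) < 2 ^ (r + 2)
        * ((C + 16 * C ^ 2) ^ (r + 2) + 4 * (r + 2) ^ (r + 2) * C ^ (r + 2)) := by positivity
    have hKB : (0:ℝ) < 1 / 2 * (16 * C ^ 2 + (C + 16 * C ^ 2) ^ 2)
        + 1 / 2 * (2 ^ (r + 2)
          * ((C + 16 * C ^ 2) ^ (r + 2) + 4 * (r + 2) ^ (r + 2) * C ^ (r + 2)))
        + (1 + 2 ^ r * ((C + 16 * C ^ 2) ^ r + 4 * r ^ r * C ^ r))
          * (1 / 2 * (16 * C ^ 2 + (C + 16 * C ^ 2) ^ 2)) := by positivity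
    have h2p : (0:ℝ) < 2 ^ (3 * (r + 2)) := Real.rpow_pos_of_pos (by norm_num) _
    refine ⟨(1 / 2 * (16 * C ^ 2 + (C + 16 * C ^ 2) ^ 2)
        + 1 / 2 * (2 ^ (r + 2)
          * ((C + 16 * C ^ 2) ^ (r + 2) + 4 * (r + 2) ^ (r + 2) * C ^ (r + 2)))
        + (1 + 2 ^ r * ((C + 16 * C ^ 2) ^ r + 4 * r ^ r * C ^ r))
          * (1 / 2 * (16 * C ^ 2 + (C + 16 * C ^ 2) ^ 2))) * 2 ^ (3 * (r + 2)),
      by positivity, ?_⟩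
    intro h hmeas hgrow t d hdI d' hdI'
    have hP : (1:ℝ) ≤ 1 + |t| := by linarith [abs_nonneg t]
    have hP0 : (0:ℝ) < 1 + |t| := by linarith
    have e6 : ((1 + |t|):ℝ) ^ (6:ℕ) ≤ (1 + |t|) ^ (3 * (r + 2)) := by
      rw [← Real.rpow_natCast (1 + |t|) 6]
      exact Real.rpow_le_rpow_of_exponent_le hP (by push_cast; linarith)
    have emul : (1 + |t|) ^ (3 * r) * ((1 + |t|):ℝ) ^ (6:ℕ) = (1 + |t|) ^ (3 * (r + 2)) := by
      rw [← Real.rpow_natCast (1 + |t|) 6, ← Real.rpow_add hP0]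
      congr 1
      push_cast
      ring
    have hgrow' : ∀ b, |h b| ≤ 1 * (1 + |b| ^ r) := fun b => by
      rw [one_mul]; exact hgrow b
    have key : ∀ x ∈ Set.Ioo (d0 - eps) (d0 + eps),
        HasDerivWithinAt (fun y => (∫ b, h b * tw t y b ∂μ) / Nc μ t y)
          (((∫ b, (h b * (-(b ^ 2) / 2)) * tw t x b ∂μ) * Nc μ t x
            - (∫ b, h b * tw t x b ∂μ) * (-(1:ℝ) / 2 * M2 μ t x)) / Nc μ t x ^ 2)
          (Set.Ioo (d0 - eps) (d0 + eps)) x := by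
      intro x hx
      have hx0 : (0:ℝ) < x := lt_trans hc0 hx.1
      have hMh := hasDerivAt_int_d (μ := μ) h hmeas.aestronglyMeasurable hr.le hgrow'
        (t := t) hc0 hx.1
      have hN := hasDerivAt_Nc_d (μ := μ) (t := t) hc0 hx.1
      exact (hMh.div hN (ne_of_gt (Nc_pos (μ := μ) hx0 (t := t)))).hasDerivWithinAt
    have hbound : ∀ x ∈ Set.Ioo (d0 - eps) (d0 + eps),
        ‖((∫ b, (h b * (-(b ^ 2) / 2)) * tw t x b ∂μ) * Nc μ t x
            - (∫ b, h b * tw t x b ∂μ) * (-(1:ℝ) / 2 * M2 μ t x)) / Nc μ t x ^ 2‖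
          ≤ (1 / 2 * (16 * C ^ 2 + (C + 16 * C ^ 2) ^ 2)
              + 1 / 2 * (2 ^ (r + 2)
                * ((C + 16 * C ^ 2) ^ (r + 2) + 4 * (r + 2) ^ (r + 2) * C ^ (r + 2)))
              + (1 + 2 ^ r * ((C + 16 * C ^ 2) ^ r + 4 * r ^ r * C ^ r))
                * (1 / 2 * (16 * C ^ 2 + (C + 16 * C ^ 2) ^ 2)))
            * (1 + |t|) ^ (3 * (r + 2)) := by
      intro x hx
      have hx0 : (0:ℝ) < x := lt_trans hc0 hx.1
      have hNpos := Nc_pos (μ := μ) hx0 (t := t)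
      have hA := Mh'_ratio_bound hx0 hC (hmean x hx) (hsub x hx) t hr h hmeas hgrow
      have hB := Mh_ratio_bound hx0 hC (hmean x hx) (hsub x hx) t hr h hmeas hgrow
      have hV := Nc_deriv_bound (t := t) hx0 hC (hmean x hx) (hsub x hx)
      set A := ∫ b, (h b * (-(b ^ 2) / 2)) * tw t x b ∂μ with hAdef
      set Bb := ∫ b, h b * tw t x b ∂μ with hBdef
      set N := Nc μ t x with hNdef
      set V := -(1:ℝ) / 2 * M2 μ t x with hVdef
      have hsplit : (A * N - Bb * V) / N ^ 2 = A / N - Bb / N * (V / N) := by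
        field_simp
      rw [Real.norm_eq_abs, hsplit]
      have habs1 : |A / N - Bb / N * (V / N)| ≤ |A| / N + |Bb| / N * |V / N| := by
        calc |A / N - Bb / N * (V / N)| ≤ |A / N| + |Bb / N * (V / N)| := abs_sub _ _
          _ = |A| / N + |Bb| / N * |V / N| := by
              rw [abs_mul, abs_div A N, abs_div Bb N, abs_of_pos hNpos]
      have hprod : |Bb| / N * |V / N|
          ≤ (1 + 2 ^ r * ((C + 16 * C ^ 2) ^ r + 4 * r ^ r * C ^ r) * (1 + |t|) ^ (3 * r))
            * ((16 * C ^ 2 + (C + 16 * C ^ 2) ^ 2) / 2 * (1 + |t|) ^ 6) := by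
        apply mul_le_mul hB hV (abs_nonneg _)
        have : (0:ℝ) ≤ 2 ^ r * ((C + 16 * C ^ 2) ^ r + 4 * r ^ r * C ^ r)
            * (1 + |t|) ^ (3 * r) :=
          mul_nonneg hΛr.le (Real.rpow_nonneg (by linarith) _)
        linarith
      -- assemble
      set CVe := 16 * C ^ 2 + (C + 16 * C ^ 2) ^ 2 with hCVedef
      set L1 := 2 ^ r * ((C + 16 * C ^ 2) ^ r + 4 * r ^ r * C ^ r) with hL1def
      set L2 := 2 ^ (r + 2)
        * ((C + 16 * C ^ 2) ^ (r + 2) + 4 * (r + 2) ^ (r + 2) * C ^ (r + 2)) with hL2def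
      set Y6 := ((1 + |t|) : ℝ) ^ (6 : ℕ) with hY6def
      set Y3 := ((1 + |t|) : ℝ) ^ (3 * r) with hY3def
      set X := ((1 + |t|) : ℝ) ^ (3 * (r + 2)) with hXdef
      have hfin : |A| / N + |Bb| / N * |V / N|
          ≤ (1 / 2 * CVe + 1 / 2 * L2 + (1 + L1) * (1 / 2 * CVe)) * X := by
        calc |A| / N + |Bb| / N * |V / N|
            ≤ 1 / 2 * (CVe * Y6 + L2 * X) + (1 + L1 * Y3) * (CVe / 2 * Y6) :=
              add_le_add hA hprod
          _ = 1 / 2 * CVe * Y6 + 1 / 2 * L2 * X + CVe / 2 * Y6 + L1 * (CVe / 2) * (Y3 * Y6) := by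
              ring
          _ = 1 / 2 * CVe * Y6 + 1 / 2 * L2 * X + CVe / 2 * Y6 + L1 * (CVe / 2) * X := by
              rw [emul]
          _ ≤ 1 / 2 * CVe * X + 1 / 2 * L2 * X + CVe / 2 * X + L1 * (CVe / 2) * X := by
              have k1 := mul_le_mul_of_nonneg_left e6
                (by linarith : (0:ℝ) ≤ 1 / 2 * CVe)
              have k2 := mul_le_mul_of_nonneg_left e6 (by linarith : (0:ℝ) ≤ CVe / 2)
              have k3 := mul_le_mul_of_nonneg_left e6
                (by nlinarith [hΛr.le, hCV.le] : (0:ℝ) ≤ L1 * (CVe / 2))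
              linarith
          _ = (1 / 2 * CVe + 1 / 2 * L2 + (1 + L1) * (1 / 2 * CVe)) * X := by ring
      exact habs1.trans hfin
    have hmvt := (convex_Ioo (d0 - eps) (d0 + eps)).norm_image_sub_le_of_norm_hasDerivWithin_le
      key hbound hdI' hdI
    rw [Real.norm_eq_abs, Real.norm_eq_abs] at hmvt
    have hd0x : (0:ℝ) < d := lt_trans hc0 hdI.1
    have hd0x' : (0:ℝ) < d' := lt_trans hc0 hdI'.1
    rw [integral_tiltLQ' hd0x h, integral_tiltLQ' hd0x' h]
    have hrp := aux_one_add_rpow (abs_nonneg t) (by linarith : (0:ℝ) ≤ 3 * (r + 2))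
    calc |(∫ b, h b * tw t d b ∂μ) / Nc μ t d - (∫ b, h b * tw t d' b ∂μ) / Nc μ t d'|
        ≤ (1 / 2 * (16 * C ^ 2 + (C + 16 * C ^ 2) ^ 2)
              + 1 / 2 * (2 ^ (r + 2)
                * ((C + 16 * C ^ 2) ^ (r + 2) + 4 * (r + 2) ^ (r + 2) * C ^ (r + 2)))
              + (1 + 2 ^ r * ((C + 16 * C ^ 2) ^ r + 4 * r ^ r * C ^ r))
                * (1 / 2 * (16 * C ^ 2 + (C + 16 * C ^ 2) ^ 2))) * (1 + |t|) ^ (3 * (r + 2)) * |d - d'| := hmvt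
      _ ≤ (1 / 2 * (16 * C ^ 2 + (C + 16 * C ^ 2) ^ 2)
              + 1 / 2 * (2 ^ (r + 2)
                * ((C + 16 * C ^ 2) ^ (r + 2) + 4 * (r + 2) ^ (r + 2) * C ^ (r + 2)))
              + (1 + 2 ^ r * ((C + 16 * C ^ 2) ^ r + 4 * r ^ r * C ^ r))
                * (1 / 2 * (16 * C ^ 2 + (C + 16 * C ^ 2) ^ 2))) * (2 ^ (3 * (r + 2)) * (1 + |t| ^ (3 * (r + 2)))) * |d - d'| := by
          apply mul_le_mul_of_nonneg_right _ (abs_nonneg _)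
          exact mul_le_mul_of_nonneg_left hrp hKB.le
      _ = (1 / 2 * (16 * C ^ 2 + (C + 16 * C ^ 2) ^ 2)
              + 1 / 2 * (2 ^ (r + 2)
                * ((C + 16 * C ^ 2) ^ (r + 2) + 4 * (r + 2) ^ (r + 2) * C ^ (r + 2)))
              + (1 + 2 ^ r * ((C + 16 * C ^ 2) ^ r + 4 * r ^ r * C ^ r))
                * (1 / 2 * (16 * C ^ 2 + (C + 16 * C ^ 2) ^ 2))) * 2 ^ (3 * (r + 2)) * |d - d'| * (1 + |t| ^ (3 * (r + 2))) := by ring
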